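/- Let p be a prime and define bijections λ∞ and μ∞ of ℤ by λ∞(i) = i+1, and μ∞(i) = i+1 if i ≢ p−1 (mod p), μ∞(i) = i−(p−1) if i ≡ p−1 (mod p). Then for every i ∈ ℤ with i ≡ 0 (mod p), the commutator [μ∞, λ∞] = μ∞⁻¹λ∞⁻¹μ∞λ∞ sends i to i + p. In particular, the element μ∞⁻¹·(λ∞⁻¹μ∞λ∞) of the group of bijections of ℤ has infinite order. -/

import Mathlib

/-- Statement 2 of Proposition 4.3, realized on the index set: the commutator
`[μ∞, λ∞]` (written in the paper's right-action convention, i.e. the permutation obtained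
by applying `μ∞⁻¹`, then `λ∞⁻¹`, then `μ∞`, then `λ∞`) sends every `i ≡ 0 (mod p)` to
`i + p`; in particular this element of the permutation group of `ℤ` has infinite order. -/
theorem stmt_7 (p : ℕ) (hp : p.Prime) (lam mu : Equiv.Perm ℤ)
    (hlam : ∀ i : ℤ, lam i = i + 1)
    (hmu : ∀ i : ℤ,
      mu i = if i % (p : ℤ) = (p : ℤ) - 1 then i - ((p : ℤ) - 1) else i + 1) :
    (∀ i : ℤ, i % (p : ℤ) = 0 → (lam * mu * lam⁻¹ * mu⁻¹) i = i + (p : ℤ)) ∧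
      ¬ IsOfFinOrder (lam * mu * lam⁻¹ * mu⁻¹) := by
  have hp2 : (2 : ℤ) ≤ (p : ℤ) := by exact_mod_cast hp.two_le
  have hlaminv : ∀ j : ℤ, lam⁻¹ j = j - 1 := by
    intro j
    apply lam.injective
    rw [Equiv.Perm.coe_inv, Equiv.apply_symm_apply, hlam]; ring
  have key : ∀ i : ℤ, i % (p : ℤ) = 0 → (lam * mu * lam⁻¹ * mu⁻¹) i = i + (p : ℤ) := by
    intro i hi
    obtain ⟨k, hk⟩ : (p : ℤ) ∣ i := Int.dvd_of_emod_eq_zero hi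
    subst hk
    have hmod1 : ((p : ℤ) * k + (p : ℤ) - 1) % (p : ℤ) = (p : ℤ) - 1 := by
      have : (p : ℤ) * k + (p : ℤ) - 1 = ((p : ℤ) - 1) + (p : ℤ) * k := by ring
      rw [this, Int.add_mul_emod_self_left, Int.emod_eq_of_lt (by omega) (by omega)]
    have hmod2 : ((p : ℤ) * k + (p : ℤ) - 2) % (p : ℤ) = (p : ℤ) - 2 := by
      have : (p : ℤ) * k + (p : ℤ) - 2 = ((p : ℤ) - 2) + (p : ℤ) * k := by ring
      rw [this, Int.add_mul_emod_self_left, Int.emod_eq_of_lt (by omega) (by omega)]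
    have hmuinv : mu⁻¹ ((p : ℤ) * k) = (p : ℤ) * k + (p : ℤ) - 1 := by
      apply mu.injective
      rw [Equiv.Perm.coe_inv, Equiv.apply_symm_apply, hmu, if_pos hmod1]; ring
    have hmustep : mu ((p : ℤ) * k + (p : ℤ) - 2) = (p : ℤ) * k + (p : ℤ) - 1 := by
      rw [hmu, if_neg (by rw [hmod2]; omega)]; ring
    show lam (mu (lam⁻¹ (mu⁻¹ ((p : ℤ) * k)))) = _
    rw [hmuinv, hlaminv]
    have : (p : ℤ) * k + (p : ℤ) - 1 - 1 = (p : ℤ) * k + (p : ℤ) - 2 := by ring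
    rw [this, hmustep, hlam]
    ring
  refine ⟨key, ?_⟩
  intro hfin
  obtain ⟨n, hn, hpow⟩ := isOfFinOrder_iff_pow_eq_one.mp hfin
  have hiter : ∀ m : ℕ, ((lam * mu * lam⁻¹ * mu⁻¹) ^ m) 0 = (m : ℤ) * (p : ℤ) := by
    intro m
    induction m with
    | zero => simp
    | succ m ih =>
      rw [pow_succ', Equiv.Perm.mul_apply, ih, key ((m : ℤ) * (p : ℤ)) (by simp [Int.mul_emod_left])]
      push_cast; ring
  have h0 : ((lam * mu * lam⁻¹ * mu⁻¹) ^ n) 0 = 0 := by rw [hpow]; rfl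
  rw [hiter n] at h0
  have : (0 : ℤ) < (n : ℤ) * (p : ℤ) := by positivity
  omega
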